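/- Let A ∈ GL(2,ℤ) and suppose 1 is an eigenvalue of A and ā ∈ 𝕋². Then (A,ā) is reversible in G = GL(2,ℤ) ⋉ 𝕋² if and only if there exists R ∈ GL(2,ℤ) with RAR⁻¹ = A⁻¹ such that (AR + I)·ā lies in the image of the map (A − I) : 𝕋² → 𝕋². -/

import Mathlib

noncomputable section

abbrev V : Type := Fin 2 → ℝ

def L : AddSubgroup V where
  carrier := {x | ∀ i, ∃ n : ℤ, x i = (n : ℝ)}
  zero_mem' := fun i => ⟨0, by simp⟩
  add_mem' := by
    rintro a b ha hb i
    obtain ⟨m, hm⟩ := ha i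
    obtain ⟨n, hn⟩ := hb i
    exact ⟨m + n, by simp [hm, hn]⟩
  neg_mem' := by
    rintro a ha i
    obtain ⟨m, hm⟩ := ha i
    exact ⟨-m, by simp [hm]⟩

abbrev T2 := V ⧸ L

def actV (A : Matrix (Fin 2) (Fin 2) ℤ) : V →+ V :=
  (Matrix.mulVecLin (A.map (Int.cast : ℤ → ℝ))).toAddMonoidHom

lemma actV_mem (A : Matrix (Fin 2) (Fin 2) ℤ) : L ≤ L.comap (actV A) := by
  intro x hx
  show actV A x ∈ L
  intro i
  refine ⟨∑ j, A i j * Classical.choose (hx j), ?_⟩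
  show (A.map (Int.cast : ℤ → ℝ)).mulVec x i = _
  simp only [Matrix.mulVec, dotProduct, Matrix.map_apply]
  push_cast
  exact Finset.sum_congr rfl fun j _ =>
    congrArg (fun t => ((A i j : ℝ)) * t) (Classical.choose_spec (hx j))

/-- The action of an integer matrix on the torus `T2`. -/
def act (A : Matrix (Fin 2) (Fin 2) ℤ) : T2 →+ T2 :=
  QuotientAddGroup.map L L (actV A) (actV_mem A)

abbrev GL2 := (Matrix (Fin 2) (Fin 2) ℤ)ˣ

/-- Multiplication in the group `G = GL(2,ℤ) ⋉ 𝕋²`. -/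
def Gmul (p q : GL2 × T2) : GL2 × T2 :=
  (p.1 * q.1, act (p.1 : Matrix (Fin 2) (Fin 2) ℤ) q.2 + p.2)

/-- Inversion in the group `G = GL(2,ℤ) ⋉ 𝕋²`. -/
def Ginv (p : GL2 × T2) : GL2 × T2 :=
  (p.1⁻¹, -act ((p.1⁻¹ : GL2) : Matrix (Fin 2) (Fin 2) ℤ) p.2)

lemma act_mk (A : Matrix (Fin 2) (Fin 2) ℤ) (v : V) :
    act A (QuotientAddGroup.mk v) = QuotientAddGroup.mk (actV A v) := rfl

lemma actV_mul (A B : Matrix (Fin 2) (Fin 2) ℤ) (v : V) :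
    actV (A * B) v = actV A (actV B v) := by
  show ((A * B).map (Int.cast : ℤ → ℝ)).mulVec v
      = (A.map (Int.cast : ℤ → ℝ)).mulVec ((B.map (Int.cast : ℤ → ℝ)).mulVec v)
  rw [Matrix.mulVec_mulVec,
    show (A * B).map (Int.cast : ℤ → ℝ)
        = A.map (Int.cast : ℤ → ℝ) * B.map (Int.cast : ℤ → ℝ) from
      Matrix.map_mul (L := A) (M := B) (f := Int.castRingHom ℝ)]

lemma act_mul (A B : Matrix (Fin 2) (Fin 2) ℤ) (x : T2) :
    act (A * B) x = act A (act B x) := by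
  induction x using QuotientAddGroup.induction_on with
  | H v => rw [act_mk, act_mk, act_mk, actV_mul]

lemma act_one (x : T2) : act 1 x = x := by
  induction x using QuotientAddGroup.induction_on with
  | H v =>
    rw [act_mk]
    congr 1
    show ((1 : Matrix (Fin 2) (Fin 2) ℤ).map (Int.cast : ℤ → ℝ)).mulVec v = v
    have h1 : (1 : Matrix (Fin 2) (Fin 2) ℤ).map (Int.cast : ℤ → ℝ) = 1 := by
      ext i j
      by_cases h : i = j <;> simp [Matrix.map_apply, Matrix.one_apply, h]
    rw [h1, Matrix.one_mulVec]

lemma act_add (A B : Matrix (Fin 2) (Fin 2) ℤ) (x : T2) :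
    act (A + B) x = act A x + act B x := by
  induction x using QuotientAddGroup.induction_on with
  | H v =>
    rw [act_mk, act_mk, act_mk]
    show QuotientAddGroup.mk _ = QuotientAddGroup.mk (actV A v + actV B v)
    congr 1
    show ((A + B).map (Int.cast : ℤ → ℝ)).mulVec v = _
    have h1 : (A + B).map (Int.cast : ℤ → ℝ)
        = A.map (Int.cast : ℤ → ℝ) + B.map (Int.cast : ℤ → ℝ) := by
      ext i j; simp [Matrix.map_apply]
    rw [h1, Matrix.add_mulVec]
    rfl

lemma act_zero (x : T2) : act 0 x = 0 := by
  induction x using QuotientAddGroup.induction_on with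
  | H v =>
    rw [act_mk]
    have h1 : actV 0 v = 0 := by
      show ((0 : Matrix (Fin 2) (Fin 2) ℤ).map (Int.cast : ℤ → ℝ)).mulVec v = 0
      have : (0 : Matrix (Fin 2) (Fin 2) ℤ).map (Int.cast : ℤ → ℝ) = 0 := by
        ext i j; simp
      rw [this, Matrix.zero_mulVec]
    rw [h1]; rfl

lemma act_neg (A : Matrix (Fin 2) (Fin 2) ℤ) (x : T2) :
    act (-A) x = -act A x := by
  have h := act_add A (-A) x
  rw [add_neg_cancel, act_zero] at h
  exact (neg_eq_of_add_eq_zero_right h.symm).symm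

lemma act_sub (A B : Matrix (Fin 2) (Fin 2) ℤ) (x : T2) :
    act (A - B) x = act A x - act B x := by
  rw [sub_eq_add_neg, act_add, act_neg, sub_eq_add_neg]

lemma abel_aux1 {G : Type*} [AddCommGroup G] {b X c a : G}
    (h : -b + (X + c) = -a) : X + a = -c - -b := by
  calc X + a = (-b + (X + c)) + (a + b - c) := by abel
    _ = -a + (a + b - c) := by rw [h]
    _ = -c - -b := by abel

lemma abel_aux2 {G : Type*} [AddCommGroup G] {P Q x Y : G}
    (h : P + Q = x - Y) : Y + (P + -x) = -Q := by
  calc Y + (P + -x) = (P + Q) + (Y - x - Q) := by abel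
    _ = (x - Y) + (Y - x - Q) := by rw [h]
    _ = -Q := by abel

/-- If `1` is an eigenvalue of `A ∈ GL(2,ℤ)`, then `(A,ā)` is reversible in
`G = GL(2,ℤ) ⋉ 𝕋²` iff there is `R ∈ GL(2,ℤ)` with `RAR⁻¹ = A⁻¹` such that
`(AR + I)·ā` lies in the image of `(A - I) : 𝕋² → 𝕋²`. -/
theorem reversible_iff_eigenvalue_one (A : GL2) (a : T2)
    (hD : ((A : Matrix (Fin 2) (Fin 2) ℤ) - 1).det = 0) :
    (∃ h : GL2 × T2, Gmul (Gmul h (A, a)) (Ginv h) = Ginv (A, a)) ↔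
    (∃ R : GL2, R * A * R⁻¹ = A⁻¹ ∧
      ∃ x : T2,
        act ((A : Matrix (Fin 2) (Fin 2) ℤ) * (R : Matrix (Fin 2) (Fin 2) ℤ) + 1) a =
          act ((A : Matrix (Fin 2) (Fin 2) ℤ) - 1) x) := by
  have hAinv : (A : Matrix (Fin 2) (Fin 2) ℤ) * (A⁻¹ : GL2) = 1 := by
    rw [← Units.val_mul, mul_inv_cancel, Units.val_one]
  have hinvA : ((A⁻¹ : GL2) : Matrix (Fin 2) (Fin 2) ℤ) * A = 1 := by
    rw [← Units.val_mul, inv_mul_cancel, Units.val_one]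
  constructor
  · rintro ⟨⟨R, b⟩, h⟩
    simp only [Gmul, Ginv, Prod.mk.injEq] at h
    obtain ⟨h1, h2⟩ := h
    have h1' : R * A * R⁻¹ = A⁻¹ := h1
    refine ⟨R, h1', -b, ?_⟩
    -- rewrite h2
    have e1 : act ((R * A : GL2) : Matrix (Fin 2) (Fin 2) ℤ)
        (-act ((R⁻¹ : GL2) : Matrix (Fin 2) (Fin 2) ℤ) b)
        = -act ((A⁻¹ : GL2) : Matrix (Fin 2) (Fin 2) ℤ) b := by
      rw [map_neg, ← act_mul, ← Units.val_mul, h1']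
    rw [e1] at h2
    -- apply act A to both sides of h2
    have h3 := congrArg (act (A : Matrix (Fin 2) (Fin 2) ℤ)) h2
    rw [map_add, map_add, map_neg, map_neg, ← act_mul, ← act_mul, ← act_mul,
      hAinv, act_one, act_one] at h3
    -- h3 : -b + (act (A*R) a + act A b) = -a
    rw [act_add, act_one, act_sub, act_one, map_neg]
    exact abel_aux1 h3
  · rintro ⟨R, h1, x, hx⟩
    refine ⟨(R, -x), ?_⟩
    simp only [Gmul, Ginv, Prod.mk.injEq]
    refine ⟨h1, ?_⟩
    have e1 : act ((R * A : GL2) : Matrix (Fin 2) (Fin 2) ℤ)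
        (-act ((R⁻¹ : GL2) : Matrix (Fin 2) (Fin 2) ℤ) (-x))
        = act ((A⁻¹ : GL2) : Matrix (Fin 2) (Fin 2) ℤ) x := by
      simp only [map_neg, neg_neg]
      rw [← act_mul, ← Units.val_mul, h1]
    rw [e1]
    -- apply act A⁻¹ to hx
    have h3 := congrArg (act ((A⁻¹ : GL2) : Matrix (Fin 2) (Fin 2) ℤ)) hx
    rw [← act_mul, ← act_mul, mul_add, mul_one, mul_sub, mul_one, ← mul_assoc, hinvA,
      one_mul, act_add, act_sub, act_one] at h3
    -- h3 : act R a + act A⁻¹ a = x - act A⁻¹ x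
    exact abel_aux2 h3
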